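/- Let H be a real Hilbert space, f : H → ℝ ∪ {+∞} a proper closed convex function, and S_f an affine support set of f. If f(x) ≥ 0 for all x ∈ H, then either 0 ∈ S_f, or the unique minimizer (a*, v*) of the norm ‖(a, v)‖² = a² + ‖v‖² over S_f satisfies a* > 0. -/

import Mathlib

/-- if f ≥ 0, then either 0 ∈ S_f or the minimal-norm element (a*, v*)
of S_f satisfies a* > 0. -/
theorem nonneg_imp_zero_mem_or_pos
    {H : Type*} [NormedAddCommGroup H] [InnerProductSpace ℝ H] [CompleteSpace H]
    (f : H → EReal) (S : Set (ℝ × H))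
    (hproper_top : ∃ x, f x ≠ ⊤) (hproper_bot : ∀ x, f x ≠ ⊥)
    (hlsc : LowerSemicontinuous f)
    (hconv : Convex ℝ {p : H × ℝ | f p.1 ≤ (p.2 : EReal)})
    (hSclosed : IsClosed S) (hSconv : Convex ℝ S)
    (hrep : ∀ x, f x = ⨆ p ∈ S, ((p.1 + inner ℝ p.2 x : ℝ) : EReal))
    (pstar : ℝ × H) (hpmem : pstar ∈ S)
    (hpmin : ∀ q ∈ S, pstar.1 ^ 2 + ‖pstar.2‖ ^ 2 ≤ q.1 ^ 2 + ‖q.2‖ ^ 2)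
    (hfnonneg : ∀ x, (0 : EReal) ≤ f x) :
    (0 : ℝ × H) ∈ S ∨ 0 < pstar.1 := by
  by_contra hcon
  push_neg at hcon
  obtain ⟨h0S, hale⟩ := hcon
  -- pstar ≠ 0
  have hpne : pstar ≠ 0 := fun h => h0S (h ▸ hpmem)
  set c : ℝ := pstar.1 ^ 2 + ‖pstar.2‖ ^ 2 with hc
  have hcpos : 0 < c := by
    rcases eq_or_ne pstar.2 0 with h2 | h2
    · have h1 : pstar.1 ≠ 0 := by
        intro h1
        exact hpne (Prod.ext_iff.mpr ⟨h1, h2⟩)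
      have hp2 := sq_pos_of_ne_zero h1
      simp only [hc, h2, norm_zero]
      nlinarith
    · have := norm_pos_iff.mpr h2
      nlinarith [sq_nonneg pstar.1]
  -- projection inequality
  have key : ∀ q ∈ S, c ≤ pstar.1 * q.1 + inner ℝ pstar.2 q.2 := by
    intro q hq
    by_contra h
    push_neg at h
    set d : ℝ := pstar.1 * (q.1 - pstar.1) + inner ℝ pstar.2 (q.2 - pstar.2) with hd
    have hin : (inner ℝ pstar.2 (q.2 - pstar.2) : ℝ) = inner ℝ pstar.2 q.2 - ‖pstar.2‖ ^ 2 := by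
      rw [inner_sub_right, real_inner_self_eq_norm_sq]
    have hdneg : d < 0 := by
      rw [hd, hin]; ring_nf; nlinarith []
    set N : ℝ := (q.1 - pstar.1) ^ 2 + ‖q.2 - pstar.2‖ ^ 2 with hN
    have hNpos : 0 < N := by
      rcases lt_or_eq_of_le (by positivity : (0:ℝ) ≤ N) with h' | h'
      · exact h'
      · exfalso
        have h1 : q.1 - pstar.1 = 0 := by nlinarith [sq_nonneg (q.1 - pstar.1), norm_nonneg (q.2 - pstar.2), sq_nonneg ‖q.2 - pstar.2‖]
        have h2 : ‖q.2 - pstar.2‖ = 0 := by nlinarith [sq_nonneg (q.1 - pstar.1), norm_nonneg (q.2 - pstar.2)]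
        have h2' : q.2 - pstar.2 = 0 := by rwa [norm_eq_zero] at h2
        rw [hd, h1, h2'] at hdneg
        simp at hdneg
    set s : ℝ := min 1 (-d / N) with hs
    have hspos : 0 < s := lt_min one_pos (div_pos (neg_pos.mpr hdneg) hNpos)
    have hsle : s ≤ -d / N := min_le_right _ _
    have hsN : s * N ≤ -d := (le_div_iff₀ hNpos).mp hsle
    -- the point
    have hmem : (1 - s) • pstar + s • q ∈ S :=
      hSconv hpmem hq (by linarith [min_le_left (1:ℝ) (-d/N)]) hspos.le (by ring)
    have hmin := hpmin _ hmem
    have h1 : ((1 - s) • pstar + s • q).1 = pstar.1 + s * (q.1 - pstar.1) := by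
      simp [Prod.fst_add, Prod.smul_fst, smul_eq_mul]; ring
    have h2 : ((1 - s) • pstar + s • q).2 = pstar.2 + s • (q.2 - pstar.2) := by
      simp [Prod.snd_add, Prod.smul_snd, smul_sub, sub_smul, one_smul]
      abel
    rw [h1, h2] at hmin
    have hnorm : ‖pstar.2 + s • (q.2 - pstar.2)‖ ^ 2
        = ‖pstar.2‖ ^ 2 + 2 * (s * inner ℝ pstar.2 (q.2 - pstar.2)) + s ^ 2 * ‖q.2 - pstar.2‖ ^ 2 := by
      rw [norm_add_sq_real, real_inner_smul_right, norm_smul]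
      simp [mul_pow, sq_abs]
    rw [hnorm] at hmin
    -- hmin : c ≤ (pstar.1 + s*(...))^2 + ...
    have hexp : c + s * (2 * d + s * N) ≤ c + s * (2 * d + s * N) := le_refl _
    have : c ≤ c + s * (2 * d + s * N) := by
      calc c ≤ (pstar.1 + s * (q.1 - pstar.1)) ^ 2 + (‖pstar.2‖ ^ 2 + 2 * (s * inner ℝ pstar.2 (q.2 - pstar.2)) + s ^ 2 * ‖q.2 - pstar.2‖ ^ 2) := hmin
        _ = c + s * (2 * d + s * N) := by rw [hc, hd, hN]; ring
    have h2d : 0 ≤ 2 * d + s * N := by nlinarith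
    nlinarith
  -- now case split on pstar.1
  rcases lt_or_eq_of_le hale with haneg | ha0
  · -- pstar.1 < 0, take x = -t • pstar.2 with t = -1/pstar.1
    set t : ℝ := -1 / pstar.1 with ht
    have htpos : 0 < t := by
      rw [ht]; exact div_pos_of_neg_of_neg (by norm_num) haneg
    set x : H := (-t) • pstar.2 with hx
    have hub : f x ≤ ((-(t * c) : ℝ) : EReal) := by
      rw [hrep x]
      refine iSup₂_le fun p hp => ?_
      rw [EReal.coe_le_coe_iff]
      have hk := key p hp
      have hinx : (inner ℝ p.2 x : ℝ) = -t * inner ℝ p.2 pstar.2 := by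
        rw [hx, real_inner_smul_right]
      rw [hinx]
      have hsymm : (inner ℝ p.2 pstar.2 : ℝ) = inner ℝ pstar.2 p.2 := real_inner_comm _ _
      rw [hsymm]
      have hta : t * pstar.1 = -1 := by
        rw [ht]; field_simp [haneg.ne]
      have h2 : t * pstar.1 * p.1 = -p.1 := by rw [hta]; ring
      nlinarith [mul_le_mul_of_nonneg_left hk htpos.le, h2]
    have h0 := (hfnonneg x).trans hub
    have h0' : (0:ℝ) ≤ -(t * c) := by exact_mod_cast h0
    nlinarith
  · -- pstar.1 = 0
    have hv : pstar.2 ≠ 0 := by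
      intro h2
      exact hpne (by simp [Prod.ext_iff, ha0, h2])
    have hcv : c = ‖pstar.2‖ ^ 2 := by rw [hc, ha0]; ring
    obtain ⟨x₀, hx₀⟩ := hproper_top
    set M : ℝ := (f x₀).toReal with hM
    have hMeq : ((M : ℝ) : EReal) = f x₀ := EReal.coe_toReal hx₀ (hproper_bot x₀)
    set t : ℝ := (M + 1) / c with ht
    set x : H := x₀ - t • pstar.2 with hx
    clear_value M t x
    have hub : f x ≤ ((-1 : ℝ) : EReal) := by
      rw [hrep x]
      refine iSup₂_le fun p hp => ?_
      rw [EReal.coe_le_coe_iff]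
      have hpM : p.1 + inner ℝ p.2 x₀ ≤ M := by
        have h1 : ((p.1 + inner ℝ p.2 x₀ : ℝ) : EReal) ≤ f x₀ := by
          rw [hrep x₀]
          exact le_iSup₂ (f := fun (p : ℝ × H) (_ : p ∈ S) => ((p.1 + inner ℝ p.2 x₀ : ℝ) : EReal)) p hp
        rw [← hMeq, EReal.coe_le_coe_iff] at h1
        exact h1
      have hinx : (inner ℝ p.2 x : ℝ) = inner ℝ p.2 x₀ - t * inner ℝ p.2 pstar.2 := by
        rw [hx, inner_sub_right, real_inner_smul_right]
      rw [hinx]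
      have hk := key p hp
      have hzero : pstar.1 * p.1 = 0 := by rw [ha0]; ring
      have hsymm : (inner ℝ pstar.2 p.2 : ℝ) = inner ℝ p.2 pstar.2 := real_inner_comm _ _
      have hkk : c ≤ inner ℝ p.2 pstar.2 := by rw [← hsymm]; linarith
      have hMnn : 0 ≤ M := by
        have h := hfnonneg x₀
        rw [← hMeq] at h
        exact_mod_cast h
      have htpos : 0 < t := by
        rw [ht]; exact div_pos (by linarith) hcpos
      have htc : t * c = M + 1 := by
        rw [ht, div_mul_cancel₀ _ hcpos.ne']
      linarith [mul_le_mul_of_nonneg_left hkk htpos.le]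
    have h0 := (hfnonneg x).trans hub
    have h0' : (0:ℝ) ≤ -1 := by exact_mod_cast h0
    linarith
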